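/- Let a>0 and β∈(0,1). There exist constants 0 < c_1 ≤ c_2 depending only on a, d and β such that for every nonnegative measurable function f on ℝ^d and every x ∈ ℝ^d: c_1 · π^{-d/2} e^{-β|x|²} ∫_{B(0, a·m(x))} f(x−y) |y|^{dβ−d} dy ≤ ∫_{B(x, a·m(x))} f(y) [γ(B(x,|x−y|))]^{β−1} dγ(y) ≤ c_2 · π^{-d/2} e^{-β|x|²} ∫_{B(0, a·m(x))} f(x−y) |y|^{dβ−d} dy, where the middle integral is with respect to the Gaussian measure γ and the outer two are with respect to Lebesgue measure. -/

import Mathlib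

open MeasureTheory ENNReal Real Set Metric
open scoped Classical

noncomputable section

/-- ℝ^d with the Euclidean norm. -/
abbrev Euc (d : ℕ) := EuclideanSpace ℝ (Fin d)

/-- The Gaussian measure dγ(x) = π^{-d/2} e^{-|x|²} dx. -/
def gaussMeasure (d : ℕ) : Measure (Euc d) :=
  volume.withDensity fun x => ENNReal.ofReal (Real.pi ^ (-(d : ℝ) / 2) * Real.exp (-‖x‖ ^ 2))

/-- m(x) = min(1, 1/|x|) (with value 1 at x = 0). -/
def adm {d : ℕ} (x : Euc d) : ℝ := if ‖x‖ ≤ 1 then 1 else ‖x‖⁻¹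

namespace Stmt17Aux

lemma adm_pos {d : ℕ} (x : Euc d) : 0 < adm x := by
  unfold adm; split
  · norm_num
  · next h => exact inv_pos.mpr (lt_trans one_pos (lt_of_not_ge h))

lemma adm_le_one {d : ℕ} (x : Euc d) : adm x ≤ 1 := by
  unfold adm; split
  · exact le_refl 1
  · next h =>
    have h1 : (1 : ℝ) < ‖x‖ := lt_of_not_ge h
    exact inv_le_one_of_one_le₀ h1.le

lemma adm_mul_norm_le_one {d : ℕ} (x : Euc d) : adm x * ‖x‖ ≤ 1 := by
  unfold adm; split
  · next h => simpa using h
  · next h =>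
    have h1 : (0 : ℝ) < ‖x‖ := lt_trans one_pos (lt_of_not_ge h)
    rw [inv_mul_cancel₀ h1.ne']

lemma normsq_bound {d : ℕ} {a : ℝ} (ha : 0 < a) (x y : Euc d)
    (h : ‖y - x‖ ≤ a * adm x) : |‖y‖ ^ 2 - ‖x‖ ^ 2| ≤ 2 * a + a ^ 2 := by
  have h1 : |‖y‖ - ‖x‖| ≤ ‖y - x‖ := abs_norm_sub_norm_le y x
  have hm0 := adm_pos x
  have hm1 := adm_le_one x
  have hmx := adm_mul_norm_le_one x
  have hx0 := norm_nonneg x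
  have hy0 := norm_nonneg y
  have ht0 := norm_nonneg (y - x)
  rw [abs_le] at h1 ⊢
  obtain ⟨h1a, h1b⟩ := h1
  have k1 : (‖y‖ - ‖x‖) * (‖y‖ + ‖x‖) ≤ ‖y - x‖ * (‖y‖ + ‖x‖) :=
    mul_le_mul_of_nonneg_right h1b (by positivity)
  have k2 : (‖x‖ - ‖y‖) * (‖x‖ + ‖y‖) ≤ ‖y - x‖ * (‖x‖ + ‖y‖) :=
    mul_le_mul_of_nonneg_right (by linarith) (by positivity)
  have k3 : ‖y - x‖ * ‖y‖ ≤ ‖y - x‖ * (‖x‖ + ‖y - x‖) :=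
    mul_le_mul_of_nonneg_left (by linarith) ht0
  have k4 : ‖y - x‖ * ‖x‖ ≤ a * adm x * ‖x‖ := mul_le_mul_of_nonneg_right h hx0
  have k5 : a * (adm x * ‖x‖) ≤ a * 1 := mul_le_mul_of_nonneg_left hmx ha.le
  have k6 : ‖y - x‖ * ‖y - x‖ ≤ a * adm x * (a * adm x) :=
    mul_le_mul h h ht0 (by positivity)
  have k7 : a * adm x * (a * adm x) ≤ a * a := by
    nlinarith [mul_le_mul_of_nonneg_left (mul_le_mul hm1 hm1 hm0.le zero_le_one)
      (mul_nonneg ha.le ha.le)]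
  constructor <;> nlinarith

/-- antitone of rpow with nonpositive exponent in ℝ≥0∞ -/
lemma rpow_anti {β : ℝ} (hβ : β < 1) {A B : ℝ≥0∞} (h : A ≤ B) :
    B ^ (β - 1) ≤ A ^ (β - 1) := by
  rw [show β - 1 = -(1 - β) by ring, ENNReal.rpow_neg, ENNReal.rpow_neg]
  exact ENNReal.inv_le_inv.mpr (ENNReal.rpow_le_rpow h (by linarith))

lemma ofReal_shuffle (c u : ℝ) (hc : 0 ≤ c) (z : ℝ≥0∞) :
    ENNReal.ofReal c * (z * ENNReal.ofReal u) = z * ENNReal.ofReal (c * u) := by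
  rw [ENNReal.ofReal_mul hc]; ring

lemma ofReal_shuffle2 (A B : ℝ) (hA : 0 ≤ A) (z : ℝ≥0∞) :
    z * ENNReal.ofReal (A * B) = ENNReal.ofReal B * (z * ENNReal.ofReal A) := by
  rw [ENNReal.ofReal_mul hA]; ring

/-- The key real-variable computation. -/
lemma real_key (d : ℕ) {β w P t s ρ : ℝ} (hw : 0 < w) (hP : 0 < P) (hρ : 0 < ρ) :
    (P * Real.exp t * Real.exp s * (ρ ^ d * w)) ^ (β - 1) * (P * (Real.exp t * Real.exp (-s))) =
      (Real.exp s * w) ^ (β - 1) * Real.exp (-s) * P ^ (β - 1) * (P * Real.exp (β * t)) *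
        ρ ^ ((d : ℝ) * β - d) := by
  have e1 : (P * Real.exp t * Real.exp s * (ρ ^ d * w)) ^ (β - 1)
      = P ^ (β - 1) * Real.exp (t * (β - 1)) * Real.exp (s * (β - 1)) *
        (ρ ^ ((d : ℝ) * β - d) * w ^ (β - 1)) := by
    rw [Real.mul_rpow (by positivity) (by positivity),
        Real.mul_rpow (by positivity) (by positivity),
        Real.mul_rpow (by positivity) (by positivity),
        Real.mul_rpow (by positivity) (by positivity),
        ← Real.exp_mul, ← Real.exp_mul, ← Real.rpow_natCast ρ d, ← Real.rpow_mul hρ.le,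
        show (d : ℝ) * (β - 1) = (d : ℝ) * β - d by ring]
  have e2 : (Real.exp s * w) ^ (β - 1) = Real.exp (s * (β - 1)) * w ^ (β - 1) := by
    rw [Real.mul_rpow (by positivity) (by positivity), ← Real.exp_mul]
  have e3 : Real.exp (β * t) = Real.exp (t * (β - 1)) * Real.exp t := by
    rw [← Real.exp_add]; congr 1; ring
  rw [e1, e2, e3]; ring

end Stmt17Aux

open Stmt17Aux

theorem stmt17 {d : ℕ} (hd : 0 < d) (a : ℝ) (ha : 0 < a)
    (β : ℝ) (hβ : β ∈ Ioo (0 : ℝ) 1) :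
    ∃ c₁ c₂ : ℝ, 0 < c₁ ∧ c₁ ≤ c₂ ∧
      ∀ f : Euc d → ℝ≥0∞, Measurable f → ∀ x : Euc d,
        (ENNReal.ofReal c₁ *
            (ENNReal.ofReal (Real.pi ^ (-(d : ℝ) / 2) * Real.exp (-β * ‖x‖ ^ 2)) *
              ∫⁻ y in ball (0 : Euc d) (a * adm x),
                f (x - y) * ENNReal.ofReal (‖y‖ ^ ((d : ℝ) * β - d)) ∂volume) ≤
          ∫⁻ y in ball x (a * adm x),
            f y * (gaussMeasure d (ball x ‖x - y‖)) ^ (β - 1) ∂gaussMeasure d) ∧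
        (∫⁻ y in ball x (a * adm x),
            f y * (gaussMeasure d (ball x ‖x - y‖)) ^ (β - 1) ∂gaussMeasure d ≤
          ENNReal.ofReal c₂ *
            (ENNReal.ofReal (Real.pi ^ (-(d : ℝ) / 2) * Real.exp (-β * ‖x‖ ^ 2)) *
              ∫⁻ y in ball (0 : Euc d) (a * adm x),
                f (x - y) * ENNReal.ofReal (‖y‖ ^ ((d : ℝ) * β - d)) ∂volume)) := by
  obtain ⟨hβ0, hβ1⟩ := hβ
  haveI : Nonempty (Fin d) := ⟨⟨0, hd⟩⟩
  set K : ℝ := 2 * a + a ^ 2 with hKdef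
  have hK : 0 < K := by positivity
  set P : ℝ := Real.pi ^ (-(d : ℝ) / 2) with hPdef
  have hP : 0 < P := Real.rpow_pos_of_pos Real.pi_pos _
  set w : ℝ := (volume (ball (0 : Euc d) 1)).toReal with hwdef
  have hw : 0 < w :=
    ENNReal.toReal_pos (measure_ball_pos _ _ one_pos).ne' measure_ball_lt_top.ne
  refine ⟨(Real.exp K * w) ^ (β - 1) * Real.exp (-K) * P ^ (β - 1),
    (Real.exp (-K) * w) ^ (β - 1) * Real.exp K * P ^ (β - 1), ?_, ?_, ?_⟩
  · positivity
  · have h1 : (Real.exp K * w) ^ (β - 1) ≤ (Real.exp (-K) * w) ^ (β - 1) := by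
      rw [show β - 1 = -(1 - β) by ring, Real.rpow_neg (by positivity),
        Real.rpow_neg (by positivity)]
      apply inv_anti₀ (by positivity)
      apply Real.rpow_le_rpow (by positivity) _ (by linarith)
      have : Real.exp (-K) ≤ Real.exp K := Real.exp_le_exp.mpr (by linarith)
      nlinarith
    have h2 : Real.exp (-K) ≤ Real.exp K := Real.exp_le_exp.mpr (by linarith)
    have h3 : (0 : ℝ) < P ^ (β - 1) := Real.rpow_pos_of_pos hP _
    apply mul_le_mul_of_nonneg_right _ h3.le
    apply mul_le_mul h1 h2 (Real.exp_pos _).le (Real.rpow_pos_of_pos (by positivity) _).le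
  intro f hf x
  set r : ℝ := a * adm x with hrdef
  have hr : 0 < r := mul_pos ha (adm_pos x)
  set t : ℝ := -‖x‖ ^ 2 with htdef
  -- density bounds
  have dens_ub : ∀ y : Euc d, ‖y - x‖ ≤ r →
      ENNReal.ofReal (P * Real.exp (-‖y‖ ^ 2)) ≤
        ENNReal.ofReal (P * (Real.exp t * Real.exp K)) := by
    intro y hy
    apply ENNReal.ofReal_le_ofReal
    apply mul_le_mul_of_nonneg_left _ hP.le
    rw [← Real.exp_add]
    apply Real.exp_le_exp.mpr
    have := (abs_le.mp (normsq_bound ha x y hy)).2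
    simp only [htdef]; linarith [(abs_le.mp (normsq_bound ha x y hy)).1]
  have dens_lb : ∀ y : Euc d, ‖y - x‖ ≤ r →
      ENNReal.ofReal (P * (Real.exp t * Real.exp (-K))) ≤
        ENNReal.ofReal (P * Real.exp (-‖y‖ ^ 2)) := by
    intro y hy
    apply ENNReal.ofReal_le_ofReal
    apply mul_le_mul_of_nonneg_left _ hP.le
    rw [← Real.exp_add]
    apply Real.exp_le_exp.mpr
    have := (abs_le.mp (normsq_bound ha x y hy)).2
    simp only [htdef]; linarith
  -- Gaussian measure of small balls
  have ball_vol : ∀ ρ : ℝ, 0 < ρ → ∀ c : ℝ, 0 ≤ c →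
      ENNReal.ofReal c * volume (ball x ρ) = ENNReal.ofReal (c * (ρ ^ d * w)) := by
    intro ρ hρ c hc
    rw [Measure.addHaar_ball_of_pos volume x hρ, finrank_euclideanSpace_fin,
      ← ENNReal.ofReal_toReal (measure_ball_lt_top (x := (0 : Euc d)) (r := 1)).ne, ← hwdef,
      ← ENNReal.ofReal_mul (by positivity), ← ENNReal.ofReal_mul hc]
  have gauss_apply : ∀ ρ : ℝ, gaussMeasure d (ball x ρ) =
      ∫⁻ z in ball x ρ, ENNReal.ofReal (P * Real.exp (-‖z‖ ^ 2)) ∂volume := by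
    intro ρ
    rw [gaussMeasure, withDensity_apply _ measurableSet_ball]
  have gauss_ub : ∀ ρ : ℝ, 0 < ρ → ρ ≤ r →
      gaussMeasure d (ball x ρ) ≤
        ENNReal.ofReal (P * Real.exp t * Real.exp K * (ρ ^ d * w)) := by
    intro ρ hρ hρr
    rw [gauss_apply ρ]
    have : ∫⁻ z in ball x ρ, ENNReal.ofReal (P * Real.exp (-‖z‖ ^ 2)) ∂volume ≤
        ∫⁻ _ in ball x ρ, ENNReal.ofReal (P * (Real.exp t * Real.exp K)) ∂volume := by
      apply lintegral_mono_ae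
      filter_upwards [ae_restrict_mem measurableSet_ball] with z hz
      exact dens_ub z (le_trans (le_of_lt (by simpa [dist_eq_norm] using hz)) hρr)
    refine this.trans ?_
    rw [setLIntegral_const, ball_vol ρ hρ _ (by positivity)]
    apply le_of_eq; congr 1; ring
  have gauss_lb : ∀ ρ : ℝ, 0 < ρ → ρ ≤ r →
      ENNReal.ofReal (P * Real.exp t * Real.exp (-K) * (ρ ^ d * w)) ≤
        gaussMeasure d (ball x ρ) := by
    intro ρ hρ hρr
    rw [gauss_apply ρ]
    have : (∫⁻ _ in ball x ρ, ENNReal.ofReal (P * (Real.exp t * Real.exp (-K))) ∂volume) ≤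
        ∫⁻ z in ball x ρ, ENNReal.ofReal (P * Real.exp (-‖z‖ ^ 2)) ∂volume := by
      apply lintegral_mono_ae
      filter_upwards [ae_restrict_mem measurableSet_ball] with z hz
      exact dens_lb z (le_trans (le_of_lt (by simpa [dist_eq_norm] using hz)) hρr)
    refine le_trans ?_ this
    rw [setLIntegral_const, ball_vol ρ hρ _ (by positivity)]
    apply le_of_eq; congr 1; ring
  -- the middle integral as a Lebesgue integral
  have hG_meas : Measurable fun y : Euc d =>
      f y * gaussMeasure d (ball x ‖x - y‖) ^ (β - 1) := by
    apply hf.mul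
    have h1 : Monotone fun ρ : ℝ => gaussMeasure d (ball x ρ) := fun ρ₁ ρ₂ h =>
      measure_mono (ball_subset_ball h)
    exact (h1.measurable.comp
      (continuous_const.sub continuous_id).norm.measurable).pow_const (β - 1)
  have hdens_meas : Measurable fun y : Euc d =>
      ENNReal.ofReal (P * Real.exp (-‖y‖ ^ 2)) := by
    apply ENNReal.measurable_ofReal.comp
    exact (continuous_const.mul ((continuous_norm.pow 2).neg.rexp)).measurable
  have gauss_int : ∀ g : Euc d → ℝ≥0∞, Measurable g → ∀ s : Set (Euc d), MeasurableSet s →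
      (∫⁻ y in s, g y ∂gaussMeasure d) =
        ∫⁻ y in s, ENNReal.ofReal (P * Real.exp (-‖y‖ ^ 2)) * g y ∂volume := by
    intro g hg s hs
    have hmeas : Measurable fun y : Euc d =>
        ENNReal.ofReal (Real.pi ^ (-(d : ℝ) / 2) * Real.exp (-‖y‖ ^ 2)) := by
      apply ENNReal.measurable_ofReal.comp
      exact (continuous_const.mul ((continuous_norm.pow 2).neg.rexp)).measurable
    rw [gaussMeasure, setLIntegral_withDensity_eq_setLIntegral_mul volume hmeas hg hs]
    rfl
  have hmid : (∫⁻ y in ball x r,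
      f y * gaussMeasure d (ball x ‖x - y‖) ^ (β - 1) ∂gaussMeasure d) =
      ∫⁻ y in ball x r, ENNReal.ofReal (P * Real.exp (-‖y‖ ^ 2)) *
        (f y * gaussMeasure d (ball x ‖x - y‖) ^ (β - 1)) ∂volume :=
    gauss_int _ hG_meas _ measurableSet_ball
  -- the punctured ball
  set S : Set (Euc d) := ball x r \ {x} with hSdef
  have hS : MeasurableSet S := measurableSet_ball.diff (measurableSet_singleton x)
  have hSae : S =ᵐ[volume] ball x r := by
    apply diff_ae_eq_self.mpr
    exact measure_mono_null inter_subset_right (measure_singleton x)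
  -- change of variables
  have hcv : ∀ g : Euc d → ℝ≥0∞,
      (∫⁻ y in ball (0 : Euc d) r, g (x - y) ∂volume) = ∫⁻ y in ball x r, g y ∂volume := by
    intro g
    have hpre : (fun y : Euc d => x - y) ⁻¹' ball x r = ball (0 : Euc d) r := by
      ext y
      simp [mem_ball, dist_eq_norm, sub_sub_cancel_left]
    rw [← hpre]
    exact (Measure.measurePreserving_sub_left volume x).setLIntegral_comp_preimage_emb
      (Homeomorph.subLeft x).measurableEmbedding g _
  -- radial integral over punctured ball
  have hrad : (∫⁻ y in ball (0 : Euc d) r,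
        f (x - y) * ENNReal.ofReal (‖y‖ ^ ((d : ℝ) * β - d)) ∂volume) =
      ∫⁻ y in S, f y * ENNReal.ofReal (‖x - y‖ ^ ((d : ℝ) * β - d)) ∂volume := by
    rw [setLIntegral_congr hSae]
    rw [← hcv fun y => f y * ENNReal.ofReal (‖x - y‖ ^ ((d : ℝ) * β - d))]
    apply lintegral_congr
    intro y
    simp [_root_.sub_sub_cancel]
  -- pointwise bounds on S
  have point_ub : ∀ y ∈ S,
      ENNReal.ofReal (P * Real.exp (-‖y‖ ^ 2)) *
        (f y * gaussMeasure d (ball x ‖x - y‖) ^ (β - 1)) ≤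
      ENNReal.ofReal ((Real.exp (-K) * w) ^ (β - 1) * Real.exp K * P ^ (β - 1) *
          (P * Real.exp (β * t))) *
        (f y * ENNReal.ofReal (‖x - y‖ ^ ((d : ℝ) * β - d))) := by
    intro y hy
    obtain ⟨hy1, hy2⟩ := hy
    have hρ0 : 0 < ‖x - y‖ := by
      rw [norm_pos_iff, sub_ne_zero]
      exact fun h => hy2 (by simp [h.symm])
    have hρr : ‖x - y‖ ≤ r := by
      rw [norm_sub_rev]
      exact le_of_lt (by simpa [dist_eq_norm] using hy1)
    set ρ : ℝ := ‖x - y‖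
    have h1 : gaussMeasure d (ball x ρ) ^ (β - 1) ≤
        ENNReal.ofReal ((P * Real.exp t * Real.exp (-K) * (ρ ^ d * w)) ^ (β - 1)) := by
      rw [← ENNReal.ofReal_rpow_of_pos (by positivity)]
      exact rpow_anti hβ1 (gauss_lb ρ hρ0 hρr)
    have h2 := dens_ub y (by rw [norm_sub_rev]; exact hρr)
    calc ENNReal.ofReal (P * Real.exp (-‖y‖ ^ 2)) *
          (f y * gaussMeasure d (ball x ρ) ^ (β - 1))
        ≤ ENNReal.ofReal (P * (Real.exp t * Real.exp K)) *
          (f y * ENNReal.ofReal ((P * Real.exp t * Real.exp (-K) * (ρ ^ d * w)) ^ (β - 1))) :=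
          mul_le_mul' h2 (mul_le_mul' le_rfl h1)
      _ = f y * ENNReal.ofReal ((P * Real.exp t * Real.exp (-K) * (ρ ^ d * w)) ^ (β - 1) *
            (P * (Real.exp t * Real.exp K))) :=
          (ofReal_shuffle2 _ _ (by positivity) (f y)).symm
      _ = f y * ENNReal.ofReal ((Real.exp (-K) * w) ^ (β - 1) * Real.exp K * P ^ (β - 1) *
            (P * Real.exp (β * t)) * ρ ^ ((d : ℝ) * β - d)) := by
          rw [show Real.exp K = Real.exp (-(-K)) by rw [neg_neg],
            real_key d hw hP hρ0, neg_neg]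
      _ = ENNReal.ofReal ((Real.exp (-K) * w) ^ (β - 1) * Real.exp K * P ^ (β - 1) *
            (P * Real.exp (β * t))) * (f y * ENNReal.ofReal (ρ ^ ((d : ℝ) * β - d))) :=
          (ofReal_shuffle _ _ (by positivity) (f y)).symm
  have point_lb : ∀ y ∈ S,
      ENNReal.ofReal ((Real.exp K * w) ^ (β - 1) * Real.exp (-K) * P ^ (β - 1) *
          (P * Real.exp (β * t))) *
        (f y * ENNReal.ofReal (‖x - y‖ ^ ((d : ℝ) * β - d))) ≤
      ENNReal.ofReal (P * Real.exp (-‖y‖ ^ 2)) *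
        (f y * gaussMeasure d (ball x ‖x - y‖) ^ (β - 1)) := by
    intro y hy
    obtain ⟨hy1, hy2⟩ := hy
    have hρ0 : 0 < ‖x - y‖ := by
      rw [norm_pos_iff, sub_ne_zero]
      exact fun h => hy2 (by simp [h.symm])
    have hρr : ‖x - y‖ ≤ r := by
      rw [norm_sub_rev]
      exact le_of_lt (by simpa [dist_eq_norm] using hy1)
    set ρ : ℝ := ‖x - y‖
    have h1 : ENNReal.ofReal ((P * Real.exp t * Real.exp K * (ρ ^ d * w)) ^ (β - 1)) ≤
        gaussMeasure d (ball x ρ) ^ (β - 1) := by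
      rw [← ENNReal.ofReal_rpow_of_pos (by positivity)]
      exact rpow_anti hβ1 (gauss_ub ρ hρ0 hρr)
    have h2 := dens_lb y (by rw [norm_sub_rev]; exact hρr)
    calc ENNReal.ofReal ((Real.exp K * w) ^ (β - 1) * Real.exp (-K) * P ^ (β - 1) *
            (P * Real.exp (β * t))) * (f y * ENNReal.ofReal (ρ ^ ((d : ℝ) * β - d)))
        = f y * ENNReal.ofReal ((Real.exp K * w) ^ (β - 1) * Real.exp (-K) * P ^ (β - 1) *
            (P * Real.exp (β * t)) * ρ ^ ((d : ℝ) * β - d)) :=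
          ofReal_shuffle _ _ (by positivity) (f y)
      _ = f y * ENNReal.ofReal ((P * Real.exp t * Real.exp K * (ρ ^ d * w)) ^ (β - 1) *
            (P * (Real.exp t * Real.exp (-K)))) := by
          rw [real_key d hw hP hρ0]
      _ = ENNReal.ofReal (P * (Real.exp t * Real.exp (-K))) *
          (f y * ENNReal.ofReal ((P * Real.exp t * Real.exp K * (ρ ^ d * w)) ^ (β - 1))) :=
          ofReal_shuffle2 _ _ (by positivity) (f y)
      _ ≤ ENNReal.ofReal (P * Real.exp (-‖y‖ ^ 2)) *
          (f y * gaussMeasure d (ball x ρ) ^ (β - 1)) :=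
          mul_le_mul' h2 (mul_le_mul' le_rfl h1)
  -- assemble
  have habs : ∀ c : ℝ, 0 ≤ c → ENNReal.ofReal c *
      (ENNReal.ofReal (Real.pi ^ (-(d : ℝ) / 2) * Real.exp (-β * ‖x‖ ^ 2)) *
        ∫⁻ y in ball (0 : Euc d) r,
          f (x - y) * ENNReal.ofReal (‖y‖ ^ ((d : ℝ) * β - d)) ∂volume) =
      ENNReal.ofReal (c * (P * Real.exp (β * t))) *
        ∫⁻ y in S, f y * ENNReal.ofReal (‖x - y‖ ^ ((d : ℝ) * β - d)) ∂volume := by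
    intro c hc
    rw [hrad, ← mul_assoc, ← ENNReal.ofReal_mul hc]
    congr 2
    rw [htdef, ← hPdef]
    congr 2
    ring
  have hmid2 : (∫⁻ y in ball x r,
      f y * gaussMeasure d (ball x ‖x - y‖) ^ (β - 1) ∂gaussMeasure d) =
      ∫⁻ y in S, ENNReal.ofReal (P * Real.exp (-‖y‖ ^ 2)) *
        (f y * gaussMeasure d (ball x ‖x - y‖) ^ (β - 1)) ∂volume := by
    rw [hmid, ← setLIntegral_congr hSae]
  constructor
  · rw [habs _ (by positivity), hmid2]
    calc ENNReal.ofReal ((Real.exp K * w) ^ (β - 1) * Real.exp (-K) * P ^ (β - 1) *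
            (P * Real.exp (β * t))) *
          ∫⁻ y in S, f y * ENNReal.ofReal (‖x - y‖ ^ ((d : ℝ) * β - d)) ∂volume
        = ∫⁻ y in S, ENNReal.ofReal ((Real.exp K * w) ^ (β - 1) * Real.exp (-K) * P ^ (β - 1) *
            (P * Real.exp (β * t))) *
            (f y * ENNReal.ofReal (‖x - y‖ ^ ((d : ℝ) * β - d))) ∂volume :=
          (lintegral_const_mul' _ _ ENNReal.ofReal_ne_top).symm
      _ ≤ ∫⁻ y in S, ENNReal.ofReal (P * Real.exp (-‖y‖ ^ 2)) *
            (f y * gaussMeasure d (ball x ‖x - y‖) ^ (β - 1)) ∂volume := by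
          apply lintegral_mono_ae
          filter_upwards [ae_restrict_mem hS] with y hy
          exact point_lb y hy
  · rw [habs _ (by positivity), hmid2]
    calc (∫⁻ y in S, ENNReal.ofReal (P * Real.exp (-‖y‖ ^ 2)) *
            (f y * gaussMeasure d (ball x ‖x - y‖) ^ (β - 1)) ∂volume)
        ≤ ∫⁻ y in S, ENNReal.ofReal ((Real.exp (-K) * w) ^ (β - 1) * Real.exp K * P ^ (β - 1) *
            (P * Real.exp (β * t))) *
            (f y * ENNReal.ofReal (‖x - y‖ ^ ((d : ℝ) * β - d))) ∂volume := by
          apply lintegral_mono_ae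
          filter_upwards [ae_restrict_mem hS] with y hy
          exact point_ub y hy
      _ = ENNReal.ofReal ((Real.exp (-K) * w) ^ (β - 1) * Real.exp K * P ^ (β - 1) *
            (P * Real.exp (β * t))) *
          ∫⁻ y in S, f y * ENNReal.ofReal (‖x - y‖ ^ ((d : ℝ) * β - d)) ∂volume :=
          lintegral_const_mul' _ _ ENNReal.ofReal_ne_top
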